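/- Fix t>0 and let μ be a probability measure on (𝒞_t^*,Σ_t^*). Define the anchor α_t(Z) := inf Z for Z ≠ ∅ and α_t(∅) := 0, set p := μ({∅}), and let κ := (α_t)_*(μ(· ∩ {Z ≠ ∅})) be the anchor pushforward on (0,t]. Assume κ and Lebesgue measure on (0,t] are mutually absolutely continuous, and let h : (0,t] → (0,∞) be a Borel version of d(Leb↾(0,t])/dκ. Define the probability measure μ^{unif} on 𝒞_t^* by dμ^{unif}(Z) = C^{-1}·(1_{{∅}}(Z) + 1_{{Z ≠ ∅}}(Z)·h(α_t(Z))) dμ(Z), where C is the normalizing constant. Then: (i) μ^{unif} and μ are mutually absolutely continuous; (ii) C = p + t and μ^{unif}({∅}) = p/(p+t); (iii) under the conditional law μ^{unif}(· | Z ≠ ∅), the anchor α_t(Z) is uniformly distributed on (0,t). -/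

import Mathlib

open MeasureTheory Set
open scoped ENNReal NNReal

namespace RandomSets

/-- Closed subsets of `[0,t]`, the hyperspace `𝒞_t^*`. -/
def CS (t : ℝ) : Type := {F : Set ℝ // IsClosed F ∧ F ⊆ Set.Icc 0 t}

/-- The Fell topology on `𝒞_t^*`: generated by the hit sets of relatively open
subsets of `[0,t]` and the miss sets of compact subsets of `[0,t]`. -/
def fellTopStar (t : ℝ) : TopologicalSpace (CS t) :=
  TopologicalSpace.generateFrom
    ({S | ∃ U : Set ℝ, IsOpen U ∧
        S = {F : CS t | (F.1 ∩ (U ∩ Set.Icc 0 t)).Nonempty}} ∪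
     {S | ∃ K : Set ℝ, IsCompact K ∧ K ⊆ Set.Icc 0 t ∧
        S = {F : CS t | F.1 ∩ K = ∅}})

instance (t : ℝ) : TopologicalSpace (CS t) := fellTopStar t

/-- `Σ_t^*`, the Borel σ-field of the Fell topology. -/
instance (t : ℝ) : MeasurableSpace (CS t) := borel (CS t)

/-- The empty configuration. -/
noncomputable def emptyCS (t : ℝ) : CS t := ⟨∅, isClosed_empty, Set.empty_subset _⟩

open Classical in
/-- The anchor map `α_t(Z) = inf Z` for `Z ≠ ∅`, `α_t(∅) = 0`. -/
noncomputable def anchor (t : ℝ) (Z : CS t) : ℝ :=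
  if Z.1.Nonempty then sInf Z.1 else 0

open Classical in
/-- The spread map `diam_t(Z) = sup Z - inf Z` for `Z ≠ ∅`, `diam_t(∅) = 0`. -/
noncomputable def spread (t : ℝ) (Z : CS t) : ℝ :=
  if Z.1.Nonempty then sSup Z.1 - sInf Z.1 else 0

open Classical in
/-- The Palm-uniformization weight `1_{{∅}}(Z) + 1_{{Z ≠ ∅}}(Z) · h(α_t(Z))`. -/
noncomputable def palmWeight (t : ℝ) (h : ℝ → ℝ) : CS t → ℝ≥0∞ :=
  fun Z => if Z.1.Nonempty then ENNReal.ofReal (h (anchor t Z)) else 1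

/-- The Palm uniformization `μ^{unif}` of `μ`:
`dμ^{unif}(Z) = C⁻¹ (1_{{∅}}(Z) + 1_{{Z ≠ ∅}}(Z)·h(α_t(Z))) dμ(Z)`. -/
noncomputable def palmUnif (t : ℝ) (h : ℝ → ℝ) (μ : Measure (CS t)) : Measure (CS t) :=
  (∫⁻ Z, palmWeight t h Z ∂μ)⁻¹ • μ.withDensity (palmWeight t h)

instance (t : ℝ) : BorelSpace (CS t) := ⟨rfl⟩

lemma isOpen_hit (t : ℝ) {U : Set ℝ} (hU : IsOpen U) :
    IsOpen {F : CS t | (F.1 ∩ (U ∩ Set.Icc 0 t)).Nonempty} :=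
  TopologicalSpace.isOpen_generateFrom_of_mem (Or.inl ⟨U, hU, rfl⟩)

lemma measurableSet_nonemptyCS (t : ℝ) : MeasurableSet {Z : CS t | Z.1.Nonempty} := by
  have : {Z : CS t | Z.1.Nonempty}
      = {F : CS t | (F.1 ∩ (Set.univ ∩ Set.Icc 0 t)).Nonempty} := by
    ext F
    simp [Set.univ_inter, Set.inter_eq_left.mpr F.2.2]
  rw [this]
  exact (isOpen_hit t isOpen_univ).measurableSet

lemma measurable_anchor (t : ℝ) : Measurable (anchor t) := by
  apply measurable_of_Iio
  intro a
  classical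
  have key : anchor t ⁻¹' Set.Iio a =
      {F : CS t | (F.1 ∩ (Set.Iio a ∩ Set.Icc 0 t)).Nonempty} ∪
      (if 0 < a then {Z : CS t | Z.1.Nonempty}ᶜ else ∅) := by
    ext Z
    by_cases hZ : Z.1.Nonempty
    · have hbdd : BddBelow Z.1 := BddBelow.mono Z.2.2 bddBelow_Icc
      have hmem : sInf Z.1 ∈ Z.1 := IsClosed.csInf_mem Z.2.1 hZ hbdd
      simp only [Set.mem_preimage, Set.mem_Iio, anchor, if_pos hZ, Set.mem_union,
        Set.mem_setOf_eq, Set.mem_compl_iff, not_not]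
      constructor
      · intro hlt
        exact Or.inl ⟨sInf Z.1, hmem, hlt, Z.2.2 hmem⟩
      · rintro (⟨x, hxZ, hxa, -⟩ | hc)
        · exact lt_of_le_of_lt (csInf_le hbdd hxZ) hxa
        · split at hc
          · exact absurd hZ hc
          · exact absurd hc (Set.notMem_empty Z)
    · have hZe : Z.1 = ∅ := Set.not_nonempty_iff_eq_empty.mp hZ
      simp only [Set.mem_preimage, Set.mem_Iio, anchor, if_neg hZ, Set.mem_union,
        Set.mem_setOf_eq, hZe, Set.empty_inter, Set.not_nonempty_empty, false_or]
      by_cases ha : 0 < a <;> simp [ha, hZ]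
  rw [key]
  refine MeasurableSet.union (isOpen_hit t isOpen_Iio).measurableSet ?_
  split
  · exact (measurableSet_nonemptyCS t).compl
  · exact MeasurableSet.empty

lemma measurable_palmWeight (t : ℝ) {h : ℝ → ℝ} (hh : Measurable h) :
    Measurable (palmWeight t h) := by
  unfold palmWeight
  exact Measurable.ite (measurableSet_nonemptyCS t)
    (ENNReal.measurable_ofReal.comp (hh.comp (measurable_anchor t))) measurable_const

lemma map_withDensity_comp {α β : Type*} [MeasurableSpace α] [MeasurableSpace β]
    (μ : Measure α) {f : α → β} (hf : Measurable f) {g : β → ℝ≥0∞} (hg : Measurable g) :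
    Measure.map f (μ.withDensity (fun x => g (f x))) = (Measure.map f μ).withDensity g := by
  ext s hs
  rw [Measure.map_apply hf hs, withDensity_apply _ (hf hs), withDensity_apply _ hs,
    setLIntegral_map hs hg hf]

/-- Lemma 4.10, Palm uniformization: let `μ` be a probability
measure on `𝒞_t^*` whose anchor pushforward `κ = (α_t)_*(μ(· ∩ {Z ≠ ∅}))` is
mutually absolutely continuous with Lebesgue measure on `(0,t]`, and let `h` be a
Borel version of `d(Leb|(0,t])/dκ`.  Then the Palm uniformization `μ^{unif}`
satisfies: (i) `μ^{unif} ∼ μ`; (ii) the normalizing constant is `C = p + t` where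
`p = μ({∅})`, and `μ^{unif}({∅}) = p/(p+t)`; (iii) conditionally on `{Z ≠ ∅}`, the
anchor is uniformly distributed on `(0,t)`. -/
theorem palm_uniformization
    (t : ℝ) (ht : 0 < t)
    (μ : Measure (CS t)) [IsProbabilityMeasure μ]
    (h : ℝ → ℝ) (hhmeas : Measurable h) (hhpos : ∀ x ∈ Set.Ioc (0:ℝ) t, 0 < h x)
    (hκac : Measure.map (anchor t) (μ.restrict {Z : CS t | Z.1.Nonempty})
        ≪ volume.restrict (Set.Ioc (0:ℝ) t))
    (hacκ : volume.restrict (Set.Ioc (0:ℝ) t)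
        ≪ Measure.map (anchor t) (μ.restrict {Z : CS t | Z.1.Nonempty}))
    (hdens : (Measure.map (anchor t) (μ.restrict {Z : CS t | Z.1.Nonempty})).withDensity
        (fun x => ENNReal.ofReal (h x)) = volume.restrict (Set.Ioc (0:ℝ) t)) :
    (palmUnif t h μ ≪ μ ∧ μ ≪ palmUnif t h μ) ∧
    ((∫⁻ Z, palmWeight t h Z ∂μ) = μ {emptyCS t} + ENNReal.ofReal t ∧
      palmUnif t h μ {emptyCS t} = μ {emptyCS t} / (μ {emptyCS t} + ENNReal.ofReal t)) ∧
    (Measure.map (anchor t)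
        (ProbabilityTheory.cond (palmUnif t h μ) {Z : CS t | Z.1.Nonempty})
      = (ENNReal.ofReal t)⁻¹ • volume.restrict (Set.Ioo (0:ℝ) t)) := by
  classical
  set N : Set (CS t) := {Z : CS t | Z.1.Nonempty} with hNdef
  have hN : MeasurableSet N := measurableSet_nonemptyCS t
  have hNc : Nᶜ = {emptyCS t} := by
    ext Z
    simp only [Set.mem_compl_iff, hNdef, Set.mem_setOf_eq, Set.not_nonempty_iff_eq_empty,
      Set.mem_singleton_iff]
    constructor
    · intro hZ; exact Subtype.ext hZ
    · intro hZ; rw [hZ]; rfl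
  set w : CS t → ℝ≥0∞ := palmWeight t h with hwdef
  have hw : Measurable w := measurable_palmWeight t hhmeas
  set p : ℝ≥0∞ := μ {emptyCS t} with hpdef
  set κ : Measure ℝ := Measure.map (anchor t) (μ.restrict N) with hκdef
  -- integral over the nonempty part
  have hintN : ∫⁻ Z in N, w Z ∂μ = ENNReal.ofReal t := by
    have h1 : ∫⁻ Z in N, w Z ∂μ
        = ∫⁻ Z in N, ENNReal.ofReal (h (anchor t Z)) ∂μ := by
      refine setLIntegral_congr_fun hN (fun Z hZ => ?_)
      have hZ' : Z.1.Nonempty := hZ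
      simp [hwdef, palmWeight, hZ']
    have h2 : ∫⁻ Z in N, ENNReal.ofReal (h (anchor t Z)) ∂μ
        = ∫⁻ x, ENNReal.ofReal (h x) ∂κ := by
      rw [hκdef, lintegral_map hhmeas.ennreal_ofReal (measurable_anchor t)]
    have h3 : ∫⁻ x, ENNReal.ofReal (h x) ∂κ
        = (κ.withDensity (fun x => ENNReal.ofReal (h x))) Set.univ := by
      rw [withDensity_apply _ MeasurableSet.univ, setLIntegral_univ]
    rw [h1, h2, h3, hκdef, hdens]
    simp [Real.volume_Ioc, ht.le]
  have hintNc : ∫⁻ Z in Nᶜ, w Z ∂μ = p := by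
    have h1 : ∫⁻ Z in Nᶜ, w Z ∂μ = ∫⁻ _ in Nᶜ, (1:ℝ≥0∞) ∂μ := by
      refine setLIntegral_congr_fun hN.compl (fun Z hZ => ?_)
      simp only [Set.mem_compl_iff, hNdef, Set.mem_setOf_eq] at hZ
      simp [hwdef, palmWeight, hZ]
    rw [h1, setLIntegral_one, hNc, hpdef]
  have hC : ∫⁻ Z, w Z ∂μ = p + ENNReal.ofReal t := by
    rw [← lintegral_add_compl (fun Z => w Z) hN, hintN, hintNc, add_comm]
  set C : ℝ≥0∞ := ∫⁻ Z, w Z ∂μ with hCdef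
  have hC0 : C ≠ 0 := by
    rw [hC]
    simp only [ne_eq, add_eq_zero, not_and]
    intro _
    simp [ENNReal.ofReal_eq_zero, not_le, ht]
  have hCtop : C ≠ ⊤ := by
    rw [hC]
    exact ENNReal.add_ne_top.mpr ⟨(measure_lt_top μ _).ne, ENNReal.ofReal_ne_top⟩
  have hCinv0 : C⁻¹ ≠ 0 := ENNReal.inv_ne_zero.mpr hCtop
  have hCinvtop : C⁻¹ ≠ ⊤ := ENNReal.inv_ne_top.mpr hC0
  -- a.e. positivity of the weight
  have hbad : μ {Z : CS t | w Z = 0} = 0 := by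
    have hmap0 : κ ((Set.Ioc (0:ℝ) t)ᶜ) = 0 := by
      refine hκac ?_
      rw [Measure.restrict_apply measurableSet_Ioc.compl]
      simp
    have hpre : (μ.restrict N) ((anchor t) ⁻¹' (Set.Ioc (0:ℝ) t)ᶜ) = 0 := by
      rw [hκdef, Measure.map_apply (measurable_anchor t) measurableSet_Ioc.compl] at hmap0
      exact hmap0
    rw [Measure.restrict_apply' hN] at hpre
    refine measure_mono_null ?_ hpre
    intro Z hZ
    simp only [Set.mem_setOf_eq] at hZ
    by_cases hZN : Z.1.Nonempty
    · simp only [hwdef, palmWeight, if_pos hZN, ENNReal.ofReal_eq_zero] at hZ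
      constructor
      · intro hmem
        exact absurd (hhpos _ hmem) (not_lt.mpr hZ)
      · exact hZN
    · simp [hwdef, palmWeight, hZN] at hZ
  have hwpos : ∀ᵐ Z ∂μ, w Z ≠ 0 := by
    rw [ae_iff]
    simpa using hbad
  -- (i)
  have hac1 : palmUnif t h μ ≪ μ := by
    refine Measure.AbsolutelyContinuous.mk fun s hs hμs => ?_
    have := withDensity_absolutelyContinuous μ w (measure_mono_null (subset_refl s) hμs)
    simp [palmUnif, Measure.smul_apply, ← hwdef, this]
  have hac2 : μ ≪ palmUnif t h μ := by
    refine (withDensity_absolutelyContinuous' hw.aemeasurable hwpos).trans ?_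
    refine Measure.AbsolutelyContinuous.mk fun s hs hμs => ?_
    simp only [palmUnif, Measure.smul_apply, smul_eq_mul, ← hwdef] at hμs
    rcases mul_eq_zero.mp hμs with h0 | h0
    · exact absurd h0 hCinv0
    · exact h0
  -- (ii)
  have hii : palmUnif t h μ {emptyCS t} = p / (p + ENNReal.ofReal t) := by
    have hmNc : MeasurableSet ({emptyCS t} : Set (CS t)) := hNc ▸ hN.compl
    rw [palmUnif, Measure.smul_apply, smul_eq_mul, ← hwdef, ← hCdef,
      withDensity_apply _ hmNc, ← hNc, hintNc, hC, mul_comm, ENNReal.div_eq_inv_mul, mul_comm]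
  -- (iii)
  have hiii : Measure.map (anchor t) (ProbabilityTheory.cond (palmUnif t h μ) N)
      = (ENNReal.ofReal t)⁻¹ • volume.restrict (Set.Ioo (0:ℝ) t) := by
    have hνN : palmUnif t h μ N = C⁻¹ * ENNReal.ofReal t := by
      rw [palmUnif, Measure.smul_apply, smul_eq_mul, ← hwdef, ← hCdef,
        withDensity_apply _ hN, hintN]
    have hrestr : (palmUnif t h μ).restrict N
        = C⁻¹ • (μ.restrict N).withDensity (fun Z => ENNReal.ofReal (h (anchor t Z))) := by
      rw [palmUnif, ← hwdef, ← hCdef, Measure.restrict_smul, restrict_withDensity hN]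
      congr 1
      refine withDensity_congr_ae ?_
      refine (ae_restrict_iff' hN).2 (ae_of_all _ fun Z hZ => ?_)
      simp only [hNdef, Set.mem_setOf_eq] at hZ
      simp [hwdef, palmWeight, hZ]
    have hmapwd : Measure.map (anchor t)
        ((μ.restrict N).withDensity (fun Z => ENNReal.ofReal (h (anchor t Z))))
        = volume.restrict (Set.Ioc (0:ℝ) t) := by
      have h4 := map_withDensity_comp (μ.restrict N) (measurable_anchor t)
        hhmeas.ennreal_ofReal
      rw [← hκdef, hdens] at h4
      exact h4
    rw [ProbabilityTheory.cond, hrestr, Measure.map_smul, Measure.map_smul, hmapwd, hνN,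
      smul_smul]
    have hscal : (C⁻¹ * ENNReal.ofReal t)⁻¹ * C⁻¹ = (ENNReal.ofReal t)⁻¹ := by
      rw [ENNReal.mul_inv (Or.inl hCinv0) (Or.inl hCinvtop), inv_inv,
        mul_comm C, mul_assoc, ENNReal.mul_inv_cancel hC0 hCtop, mul_one]
    rw [hscal, Measure.restrict_congr_set Ioo_ae_eq_Ioc]
  exact ⟨⟨hac1, hac2⟩, ⟨hC, hii⟩, hiii⟩

end RandomSets
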